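/- Let A be a real m×n matrix, b ∈ ℝ^m, x ∈ ℝ^n and λ ≥ 0. If Aᵀ(Ax − b) ≠ 0, then det J(x,λ) < 0; in particular the Jacobian matrix J(x,λ) is nonsingular. -/

import Mathlib

open Matrix

/-- If `λ ≥ 0` and `Aᵀ(Ax − b) ≠ 0`, then the Jacobian block matrix
`J(x,λ) = [[λAᵀA + I, Aᵀ(Ax − b)], [(Ax − b)ᵀA, 0]]` has negative determinant;
in particular it is nonsingular. -/
theorem det_jacobian_neg {m n : ℕ} (A : Matrix (Fin m) (Fin n) ℝ)
    (b : Fin m → ℝ) (x : Fin n → ℝ) (lam : ℝ) (hlam : 0 ≤ lam)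
    (hg : Aᵀ *ᵥ (A *ᵥ x - b) ≠ 0) :
    (Matrix.fromBlocks (lam • (Aᵀ * A) + 1)
        (Matrix.replicateCol (Fin 1) (Aᵀ *ᵥ (A *ᵥ x - b)))
        (Matrix.replicateRow (Fin 1) (Aᵀ *ᵥ (A *ᵥ x - b))) (0 : Matrix (Fin 1) (Fin 1) ℝ)).det < 0
    ∧ IsUnit (Matrix.fromBlocks (lam • (Aᵀ * A) + 1)
        (Matrix.replicateCol (Fin 1) (Aᵀ *ᵥ (A *ᵥ x - b)))
        (Matrix.replicateRow (Fin 1) (Aᵀ *ᵥ (A *ᵥ x - b))) (0 : Matrix (Fin 1) (Fin 1) ℝ)).det := by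
  set g : Fin n → ℝ := Aᵀ *ᵥ (A *ᵥ x - b) with hgdef
  set M : Matrix (Fin n) (Fin n) ℝ := lam • (Aᵀ * A) + 1 with hMdef
  -- M is positive definite
  have hsemi : (lam • (Aᵀ * A)).PosSemidef := by
    have h1 : (Aᵀ * A).PosSemidef := by
      simpa using Matrix.posSemidef_conjTranspose_mul_self A
    refine Matrix.PosSemidef.of_dotProduct_mulVec_nonneg ?_ (fun y => ?_)
    · unfold Matrix.IsHermitian
      rw [conjTranspose_smul]
      simp [h1.1.eq]
    · rw [smul_mulVec, dotProduct_smul, smul_eq_mul]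
      exact mul_nonneg hlam (h1.dotProduct_mulVec_nonneg y)
  have hMpos : M.PosDef := Matrix.PosDef.posSemidef_add hsemi Matrix.PosDef.one
  have hMinv : M⁻¹.PosDef := hMpos.inv
  haveI : Invertible M := hMpos.isUnit.invertible
  have hdet : (Matrix.fromBlocks M (Matrix.replicateCol (Fin 1) g) (Matrix.replicateRow (Fin 1) g)
      (0 : Matrix (Fin 1) (Fin 1) ℝ)).det
      = M.det * (-(g ⬝ᵥ M⁻¹ *ᵥ g)) := by
    rw [Matrix.det_fromBlocks₁₁]
    have hsym : M⁻¹ᵀ = M⁻¹ := by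
      ext i j
      have h2 := congrFun (congrFun hMinv.1 i) j
      simpa using h2
    congr 1
    rw [Matrix.det_fin_one]
    rw [Matrix.invOf_eq_nonsing_inv]
    nth_rewrite 1 [← hsym]
    simp [Matrix.mul_apply, Matrix.mulVec, dotProduct,
      Finset.mul_sum, mul_comm, mul_assoc]
  have hq : 0 < g ⬝ᵥ M⁻¹ *ᵥ g := by
    have := hMinv.dotProduct_mulVec_pos hg
    simpa using this
  have hneg : (Matrix.fromBlocks M (Matrix.replicateCol (Fin 1) g) (Matrix.replicateRow (Fin 1) g)
      (0 : Matrix (Fin 1) (Fin 1) ℝ)).det < 0 := by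
    rw [hdet]
    exact mul_neg_of_pos_of_neg hMpos.det_pos (neg_neg_of_pos hq)
  exact ⟨hneg, hneg.ne.isUnit⟩
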